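/- Let M be the real symmetric (p×p) bordered diagonal matrix with first row (α, b_1, ..., b_{p-1}), first column (α, b_1, ..., b_{p-1})ᵀ, diagonal entries α, α_1, ..., α_{p-1}, and zeros elsewhere. Then the characteristic polynomial of M is χ_M(X) = (X - α)·∏_{i=1}^{p-1}(X - α_i) - Σ_{k=1}^{p-1} b_k² · ∏_{i≠k}(X - α_i). -/
import Mathlib


open Matrix Polynomial

/-- The characteristic polynomial of the bordered diagonal matrix with corner `α`,
border `b`, and diagonal `d` is
`(X - α) ∏ᵢ (X - dᵢ) - ∑ₖ bₖ² ∏_{i ≠ k} (X - dᵢ)`. -/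
theorem stmt3 (k : ℕ) (α : ℝ) (b d : Fin k → ℝ)
    (M : Matrix (Unit ⊕ Fin k) (Unit ⊕ Fin k) ℝ)
    (hM11 : M (Sum.inl ()) (Sum.inl ()) = α)
    (hMrow : ∀ i, M (Sum.inl ()) (Sum.inr i) = b i)
    (hMcol : ∀ i, M (Sum.inr i) (Sum.inl ()) = b i)
    (hMdiag : ∀ i j, M (Sum.inr i) (Sum.inr j) = if i = j then d i else 0) :
    M.charpoly =
      (X - Polynomial.C α) * ∏ i, (X - Polynomial.C (d i)) -
        ∑ j, Polynomial.C (b j ^ 2) * ∏ i ∈ Finset.univ.erase j, (X - Polynomial.C (d i)) := by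
  classical
  have hne : ∀ j : Fin k, (Sum.inl () : Unit ⊕ Fin k) ≠ Sum.inr j := fun j => Sum.inl_ne_inr
  set N := charmatrix M with hNdef
  have hNll : N (Sum.inl ()) (Sum.inl ()) = X - C α := by
    rw [hNdef, charmatrix_apply_eq, hM11]
  have hNlr : ∀ j, N (Sum.inl ()) (Sum.inr j) = -C (b j) := by
    intro j; rw [hNdef, charmatrix_apply_ne _ _ _ (hne j), hMrow]
  have hNrl : ∀ j, N (Sum.inr j) (Sum.inl ()) = -C (b j) := by
    intro j; rw [hNdef, charmatrix_apply_ne _ _ _ (hne j).symm, hMcol]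
  have hNrr : ∀ i j : Fin k, N (Sum.inr i) (Sum.inr j)
      = if i = j then X - C (d i) else 0 := by
    intro i j
    by_cases h : i = j
    · subst h; rw [hNdef, charmatrix_apply_eq, hMdiag]; simp
    · rw [hNdef, charmatrix_apply_ne _ _ _ (by simpa using h), hMdiag]
      simp [h]
  rw [Matrix.charpoly, Matrix.det_apply, ← hNdef]
  set S : Finset (Equiv.Perm (Unit ⊕ Fin k)) :=
    insert 1 (Finset.univ.image fun j : Fin k =>
      Equiv.swap (Sum.inl () : Unit ⊕ Fin k) (Sum.inr j)) with hS
  rw [← Finset.sum_subset (Finset.subset_univ S) ?_]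
  · -- main computation over S
    have hnotmem : (1 : Equiv.Perm (Unit ⊕ Fin k)) ∉
        Finset.univ.image fun j : Fin k =>
          Equiv.swap (Sum.inl () : Unit ⊕ Fin k) (Sum.inr j) := by
      simp only [Finset.mem_image, Finset.mem_univ, true_and]
      rintro ⟨j, hj⟩
      have := congrArg (fun σ : Equiv.Perm (Unit ⊕ Fin k) => σ (Sum.inl ())) hj
      simp [Equiv.swap_apply_left] at this
    rw [hS, Finset.sum_insert hnotmem, Finset.sum_image (by
      intro j _ j' _ h
      have := congrArg (fun σ : Equiv.Perm (Unit ⊕ Fin k) => σ (Sum.inl ())) h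
      simpa [Equiv.swap_apply_left] using this)]
    have h1 : (Equiv.Perm.sign (1 : Equiv.Perm (Unit ⊕ Fin k))) •
        ∏ x, N ((1 : Equiv.Perm (Unit ⊕ Fin k)) x) x
        = (X - C α) * ∏ i, (X - C (d i)) := by
      rw [Equiv.Perm.sign_one, one_smul]
      rw [Fintype.prod_sum_type]
      congr 1
      · simpa using hNll
      · exact Finset.prod_congr rfl fun i _ => by simp [hNrr]
    have h2 : ∀ j : Fin k,
        (Equiv.Perm.sign (Equiv.swap (Sum.inl () : Unit ⊕ Fin k) (Sum.inr j))) •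
          ∏ x, N (Equiv.swap (Sum.inl () : Unit ⊕ Fin k) (Sum.inr j) x) x
        = -(C (b j ^ 2) * ∏ i ∈ Finset.univ.erase j, (X - C (d i))) := by
      intro j
      rw [Equiv.Perm.sign_swap (hne j), Fintype.prod_sum_type]
      have hu : (∏ u : Unit, N (Equiv.swap (Sum.inl () : Unit ⊕ Fin k) (Sum.inr j)
          (Sum.inl u)) (Sum.inl u)) = -C (b j) := by
        simp [Equiv.swap_apply_left, hNrl]
      have hv : (∏ i : Fin k, N (Equiv.swap (Sum.inl () : Unit ⊕ Fin k) (Sum.inr j)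
          (Sum.inr i)) (Sum.inr i))
          = -C (b j) * ∏ i ∈ Finset.univ.erase j, (X - C (d i)) := by
        rw [← Finset.mul_prod_erase _ _ (Finset.mem_univ j)]
        congr 1
        · rw [Equiv.swap_apply_right, hNlr]
        · refine Finset.prod_congr rfl fun i hi => ?_
          have hij : i ≠ j := (Finset.mem_erase.mp hi).1
          rw [Equiv.swap_apply_of_ne_of_ne (by simp) (by simp [hij]), hNrr]
          simp
      rw [hu, hv]
      have : (-C (b j)) * (-C (b j) * ∏ i ∈ Finset.univ.erase j, (X - C (d i)))
          = C (b j ^ 2) * ∏ i ∈ Finset.univ.erase j, (X - C (d i)) := by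
        rw [← mul_assoc, neg_mul_neg, ← C_mul, ← sq]
      rw [this]
      simp
    rw [h1, Finset.sum_congr rfl fun j _ => h2 j]
    rw [Finset.sum_neg_distrib, ← sub_eq_add_neg]
  · -- vanishing outside S
    intro σ _ hσ
    have key : ∃ x, N (σ x) x = 0 := by
      by_contra hcon
      push_neg at hcon
      have hfix : ∀ i : Fin k, σ (Sum.inr i) = Sum.inl () ∨ σ (Sum.inr i) = Sum.inr i := by
        intro i
        rcases h : σ (Sum.inr i) with u | i'
        · cases u; exact Or.inl rfl
        · rcases eq_or_ne i' i with rfl | hii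
          · exact Or.inr rfl
          · exfalso
            apply hcon (Sum.inr i)
            rw [h, hNrr]
            simp [hii]
      by_cases hex : ∃ i₀, σ (Sum.inr i₀) = Sum.inl ()
      · obtain ⟨i₀, hi₀⟩ := hex
        have hfix' : ∀ i, i ≠ i₀ → σ (Sum.inr i) = Sum.inr i := by
          intro i hi
          rcases hfix i with h | h
          · exact absurd (σ.injective (h.trans hi₀.symm)) (by simpa using hi)
          · exact h
        have hinl : σ (Sum.inl ()) = Sum.inr i₀ := by
          rcases h : σ (Sum.inl ()) with u | i'
          · cases u
            exact absurd (σ.injective (h.trans hi₀.symm)) (by simp)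
          · rcases eq_or_ne i' i₀ with rfl | hii
            · rfl
            · exact absurd (σ.injective (h.trans (hfix' i' hii).symm)) (by simp)
        apply hσ
        rw [hS]
        refine Finset.mem_insert_of_mem (Finset.mem_image.mpr ⟨i₀, Finset.mem_univ _, ?_⟩)
        ext x
        rcases x with u | i
        · cases u; rw [Equiv.swap_apply_left, hinl]
        · rcases eq_or_ne i i₀ with rfl | hii
          · rw [Equiv.swap_apply_right, hi₀]
          · rw [Equiv.swap_apply_of_ne_of_ne (by simp) (by simp [hii]), hfix' i hii]
      · push_neg at hex
        have hfix' : ∀ i, σ (Sum.inr i) = Sum.inr i := fun i => (hfix i).resolve_left (hex i)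
        have hinl : σ (Sum.inl ()) = Sum.inl () := by
          rcases h : σ (Sum.inl ()) with u | i'
          · cases u; rfl
          · exact absurd (σ.injective (h.trans (hfix' i').symm)) (by simp)
        apply hσ
        have : σ = 1 := by
          ext x
          rcases x with u | i
          · cases u; simpa using hinl
          · simpa using hfix' i
        rw [hS, this]
        exact Finset.mem_insert_self _ _
    obtain ⟨x, hx⟩ := key
    have : (∏ i : Unit ⊕ Fin k, N (σ i) i) = 0 :=
      Finset.prod_eq_zero (Finset.mem_univ x) hx
    rw [this, smul_zero]
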